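/- Under hypotheses (2.5) and (2.6), the set T := {y ∈ F_p^× : |S_2 ∩ y⁻¹S_2| > Δp/(8φ(0))} satisfies |T| ≥ (Δ⁵/2¹⁵)|S_1|. -/

import Mathlib

open Finset Complex
open scoped Classical BigOperators Pointwise

/-- The additive character `x ↦ e^{2πix/p}` on `ZMod p`. -/
noncomputable def ePsi (p : ℕ) (x : ZMod p) : ℂ :=
  Complex.exp (2 * Real.pi * Complex.I * (x.val : ℂ) / (p : ℂ))

/-- Fourier transform of a (real) measure on `ZMod p`. -/
noncomputable def ft (p : ℕ) [NeZero p] (μ : ZMod p → ℝ) (ξ : ZMod p) : ℂ :=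
  ∑ x : ZMod p, (μ x : ℂ) * ePsi p (x * ξ)

/-- Convolution of two functions on `ZMod p`. -/
noncomputable def cnv (p : ℕ) [NeZero p] (f g : ZMod p → ℝ) (x : ZMod p) : ℝ :=
  ∑ y : ZMod p, f y * g (x - y)

/-- `φ(x) = p · (μ ∗ μ⁻)(x)`. -/
noncomputable def phiF (p : ℕ) [NeZero p] (μ : ZMod p → ℝ) (x : ZMod p) : ℝ :=
  (p : ℝ) * cnv p μ (fun y => μ (-y)) x

/-- `k`-fold convolution of `f` (0-fold is the Dirac mass at 0). -/
noncomputable def convIter (p : ℕ) [NeZero p] (f : ZMod p → ℝ) : ℕ → ZMod p → ℝ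
  | 0 => fun x => if x = 0 then 1 else 0
  | n + 1 => cnv p f (convIter p f n)

/-- `ν_k`, the `k`-fold convolution of `ν = μ ∗ μ⁻`. -/
noncomputable def nuk (p : ℕ) [NeZero p] (μ : ZMod p → ℝ) (k : ℕ) : ZMod p → ℝ :=
  convIter p (cnv p μ (fun y => μ (-y))) k

/-- `Λ_δ`, the set of large Fourier coefficients. -/
noncomputable def Lam (p : ℕ) [NeZero p] (μ : ZMod p → ℝ) (δ : ℝ) : Finset (ZMod p) :=
  Finset.univ.filter (fun ξ => (p : ℝ) ^ (-δ) < ‖ft p μ ξ‖)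


section Aux
variable (p : ℕ) [NeZero p]

noncomputable def zetaP : ℂ := Complex.exp (2 * Real.pi * Complex.I / p)

lemma ePsi_eq (x : ZMod p) : ePsi p x = zetaP p ^ x.val := by
  rw [zetaP, ← Complex.exp_nat_mul, ePsi]
  congr 1
  ring

lemma zetaP_pow_p : zetaP p ^ p = 1 := by
  have hp : (p : ℂ) ≠ 0 := Nat.cast_ne_zero.2 (NeZero.ne p)
  rw [zetaP, ← Complex.exp_nat_mul,
    show (p : ℂ) * (2 * Real.pi * Complex.I / p) = 2 * Real.pi * Complex.I by field_simp,
    Complex.exp_two_pi_mul_I]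

lemma ePsi_zero : ePsi p 0 = 1 := by
  rw [ePsi_eq, ZMod.val_zero, pow_zero]

lemma ePsi_add (a b : ZMod p) : ePsi p (a + b) = ePsi p a * ePsi p b := by
  rw [ePsi_eq, ePsi_eq, ePsi_eq, ← pow_add, ZMod.val_add]
  conv_rhs => rw [← Nat.mod_add_div (a.val + b.val) p, pow_add, pow_mul, zetaP_pow_p,
    one_pow, mul_one]

lemma abs_ePsi (x : ZMod p) : ‖ePsi p x‖ = 1 := by
  have h : ‖zetaP p‖ ^ p = 1 := by
    rw [← norm_pow, zetaP_pow_p, norm_one]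
  have h1 : ‖zetaP p‖ = 1 := by
    rcases pow_eq_one_iff_cases.mp h with h' | h' | h'
    · exact absurd h' (NeZero.ne p)
    · exact h'
    · nlinarith [norm_nonneg (zetaP p), h'.1]
  rw [ePsi_eq, norm_pow, h1, one_pow]

lemma ePsi_ne_zero (x : ZMod p) : ePsi p x ≠ 0 := by
  intro h
  have := abs_ePsi p x
  rw [h, norm_zero] at this
  norm_num at this

lemma ePsi_mul_neg (x : ZMod p) : ePsi p x * ePsi p (-x) = 1 := by
  rw [← ePsi_add, add_neg_cancel, ePsi_zero]

lemma conj_ePsi (x : ZMod p) : (starRingEnd ℂ) (ePsi p x) = ePsi p (-x) := by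
  have h1 : (starRingEnd ℂ) (ePsi p x) * ePsi p x = 1 := by
    rw [mul_comm, Complex.mul_conj, Complex.normSq_eq_norm_sq, abs_ePsi]
    norm_num
  have h2 : ePsi p (-x) * ePsi p x = 1 := by rw [mul_comm]; exact ePsi_mul_neg p x
  exact mul_right_cancel₀ (ePsi_ne_zero p x) (h1.trans h2.symm)

end Aux

section Prime
variable (p : ℕ) [Fact p.Prime]

lemma sum_ePsi (x : ZMod p) :
    ∑ ξ : ZMod p, ePsi p (x * ξ) = if x = 0 then (p : ℂ) else 0 := by
  split_ifs with hx
  · subst hx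
    simp [ePsi_zero, Finset.card_univ, ZMod.card]
  · have hre : ∑ ξ : ZMod p, ePsi p (x * ξ) = ∑ ξ : ZMod p, ePsi p ξ :=
      Fintype.sum_equiv (Equiv.mulLeft₀ x hx) _ _ (fun ξ => rfl)
    rw [hre]
    have hval : ∑ ξ : ZMod p, ePsi p ξ = ∑ j ∈ Finset.range p, zetaP p ^ j := by
      refine Finset.sum_nbij' (fun ξ => ξ.val) (fun j => (j : ZMod p)) ?_ ?_ ?_ ?_ ?_
      · intro a _; exact Finset.mem_range.2 a.val_lt
      · intro a _; exact Finset.mem_univ _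
      · intro a _; exact ZMod.natCast_rightInverse a
      · intro j hj; exact ZMod.val_cast_of_lt (Finset.mem_range.1 hj)
      · intro a _; exact ePsi_eq p a
    rw [hval]
    exact (Complex.isPrimitiveRoot_exp p (NeZero.ne p)).geom_sum_eq_zero
      (Fact.out : p.Prime).one_lt

end Prime

section Nu
variable (p : ℕ) [Fact p.Prime] (μ : ZMod p → ℝ)

noncomputable def nuF : ZMod p → ℝ := cnv p μ (fun y => μ (-y))

lemma nuF_apply (x : ZMod p) : nuF p μ x = ∑ y : ZMod p, μ y * μ (y - x) := by
  simp [nuF, cnv, neg_sub]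

lemma nuF_nonneg (hpos : ∀ x, 0 ≤ μ x) (x : ZMod p) : 0 ≤ nuF p μ x := by
  rw [nuF_apply]
  exact Finset.sum_nonneg fun y _ => mul_nonneg (hpos y) (hpos _)

lemma nuF_zero_eq : nuF p μ 0 = ∑ x : ZMod p, μ x ^ 2 := by
  rw [nuF_apply]
  exact Finset.sum_congr rfl fun y _ => by rw [sub_zero, sq]

lemma nuF_even (x : ZMod p) : nuF p μ (-x) = nuF p μ x := by
  rw [nuF_apply, nuF_apply,
    ← Equiv.sum_comp (Equiv.subRight x) (fun y => μ y * μ (y - -x))]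
  refine Finset.sum_congr rfl fun y _ => ?_
  simp only [Equiv.subRight_apply, sub_neg_eq_add, sub_add_cancel]
  ring

lemma nuF_sum (hsum : ∑ x : ZMod p, μ x = 1) : ∑ x : ZMod p, nuF p μ x = 1 := by
  have : ∑ x : ZMod p, nuF p μ x = ∑ y : ZMod p, μ y * ∑ x : ZMod p, μ (y - x) := by
    simp only [nuF_apply, Finset.mul_sum]
    exact Finset.sum_comm
  rw [this]
  have h2 : ∀ y : ZMod p, ∑ x : ZMod p, μ (y - x) = 1 := by
    intro y
    rw [← Equiv.sum_comp (Equiv.subLeft y) (fun x => μ (y - x))]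
    simpa [Equiv.subLeft_apply, sub_sub_cancel] using hsum
  simp only [h2, mul_one, hsum]

lemma nuF_le_zero (hpos : ∀ x, 0 ≤ μ x) (x : ZMod p) : nuF p μ x ≤ nuF p μ 0 := by
  have cs := Finset.sum_mul_sq_le_sq_mul_sq Finset.univ (fun y => μ y) (fun y => μ (y - x))
  have h2 : ∑ y : ZMod p, μ (y - x) ^ 2 = ∑ y : ZMod p, μ y ^ 2 := by
    rw [← Equiv.sum_comp (Equiv.subRight x) (fun y => μ y ^ 2)]
    rfl
  rw [h2] at cs
  have h0 : nuF p μ 0 = ∑ y : ZMod p, μ y ^ 2 := nuF_zero_eq p μ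
  have hx : nuF p μ x = ∑ y : ZMod p, μ y * μ (y - x) := nuF_apply p μ x
  nlinarith [nuF_nonneg p μ hpos x, nuF_nonneg p μ hpos 0]

lemma ft_abs_sq (ξ : ZMod p) :
    ((‖ft p μ ξ‖ ^ 2 : ℝ) : ℂ) =
      ∑ x : ZMod p, ((nuF p μ x : ℝ) : ℂ) * ePsi p (x * ξ) := by
  have hconj : (starRingEnd ℂ) (ft p μ ξ) = ∑ b : ZMod p, ((μ b : ℝ) : ℂ) * ePsi p (-(b * ξ)) := by
    rw [ft, map_sum]
    exact Finset.sum_congr rfl fun b _ => by rw [map_mul, Complex.conj_ofReal, conj_ePsi]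
  have hL : ((‖ft p μ ξ‖ ^ 2 : ℝ) : ℂ) = ft p μ ξ * (starRingEnd ℂ) (ft p μ ξ) := by
    rw [Complex.mul_conj, Complex.normSq_eq_norm_sq]
  rw [hL, hconj]
  calc ft p μ ξ * ∑ b : ZMod p, ((μ b : ℝ) : ℂ) * ePsi p (-(b * ξ))
      = ∑ a : ZMod p, ∑ b : ZMod p, ((μ a : ℝ) : ℂ) * ((μ b : ℝ) : ℂ) * ePsi p ((a - b) * ξ) := by
        rw [ft, Finset.sum_mul_sum]
        refine Finset.sum_congr rfl fun a _ => Finset.sum_congr rfl fun b _ => ?_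
        rw [show (a - b) * ξ = a * ξ + -(b * ξ) by ring, ePsi_add]
        ring
    _ = ∑ x : ZMod p, ((nuF p μ x : ℝ) : ℂ) * ePsi p (x * ξ) := by
        symm
        calc ∑ x : ZMod p, ((nuF p μ x : ℝ) : ℂ) * ePsi p (x * ξ)
            = ∑ x : ZMod p, ∑ w : ZMod p,
                ((μ w : ℝ) : ℂ) * ((μ (w - x) : ℝ) : ℂ) * ePsi p (x * ξ) := by
              refine Finset.sum_congr rfl fun x _ => ?_
              rw [nuF_apply]
              push_cast
              rw [Finset.sum_mul]
          _ = ∑ w : ZMod p, ∑ x : ZMod p,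
                ((μ w : ℝ) : ℂ) * ((μ (w - x) : ℝ) : ℂ) * ePsi p (x * ξ) := Finset.sum_comm
          _ = ∑ w : ZMod p, ∑ b : ZMod p,
                ((μ w : ℝ) : ℂ) * ((μ b : ℝ) : ℂ) * ePsi p ((w - b) * ξ) := by
              refine Finset.sum_congr rfl fun w _ => ?_
              rw [← Equiv.sum_comp (Equiv.subLeft w)
                (fun x => ((μ w : ℝ) : ℂ) * ((μ (w - x) : ℝ) : ℂ) * ePsi p (x * ξ))]
              refine Finset.sum_congr rfl fun b _ => ?_
              simp [Equiv.subLeft_apply, sub_sub_cancel]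

end Nu

section Key
variable (p : ℕ) [Fact p.Prime] (μ : ZMod p → ℝ)

lemma key_nu (y : ZMod p) :
    ∑ ξ : ZMod p, ‖ft p μ ξ‖ ^ 2 * ‖ft p μ (y * ξ)‖ ^ 2
      = (p : ℝ) * ∑ x : ZMod p, nuF p μ x * nuF p μ (y * x) := by
  have main : ∑ ξ : ZMod p,
        ((‖ft p μ ξ‖ ^ 2 : ℝ) : ℂ) * ((‖ft p μ (y * ξ)‖ ^ 2 : ℝ) : ℂ)
      = (p : ℂ) * ∑ x : ZMod p, ((nuF p μ x : ℝ) : ℂ) * ((nuF p μ (y * x) : ℝ) : ℂ) := by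
    calc ∑ ξ : ZMod p,
        ((‖ft p μ ξ‖ ^ 2 : ℝ) : ℂ) * ((‖ft p μ (y * ξ)‖ ^ 2 : ℝ) : ℂ)
        = ∑ ξ : ZMod p, ∑ a : ZMod p, ∑ b : ZMod p,
            ((nuF p μ a : ℝ) : ℂ) * ((nuF p μ b : ℝ) : ℂ) * ePsi p ((a + b * y) * ξ) := by
          refine Finset.sum_congr rfl fun ξ _ => ?_
          rw [ft_abs_sq, ft_abs_sq, Finset.sum_mul_sum]
          refine Finset.sum_congr rfl fun a _ => Finset.sum_congr rfl fun b _ => ?_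
          rw [show (a + b * y) * ξ = a * ξ + b * (y * ξ) by ring, ePsi_add]
          ring
      _ = ∑ a : ZMod p, ∑ b : ZMod p, ∑ ξ : ZMod p,
            ((nuF p μ a : ℝ) : ℂ) * ((nuF p μ b : ℝ) : ℂ) * ePsi p ((a + b * y) * ξ) := by
          rw [Finset.sum_comm]
          exact Finset.sum_congr rfl fun a _ => Finset.sum_comm
      _ = ∑ b : ZMod p, ∑ a : ZMod p, ∑ ξ : ZMod p,
            ((nuF p μ a : ℝ) : ℂ) * ((nuF p μ b : ℝ) : ℂ) * ePsi p ((a + b * y) * ξ) :=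
          Finset.sum_comm
      _ = ∑ b : ZMod p, ∑ a : ZMod p,
            ((nuF p μ a : ℝ) : ℂ) * ((nuF p μ b : ℝ) : ℂ) *
              (if a + b * y = 0 then (p : ℂ) else 0) := by
          refine Finset.sum_congr rfl fun b _ => Finset.sum_congr rfl fun a _ => ?_
          rw [← Finset.mul_sum, sum_ePsi]
      _ = ∑ b : ZMod p,
            ((nuF p μ (-(b * y)) : ℝ) : ℂ) * ((nuF p μ b : ℝ) : ℂ) * (p : ℂ) := by
          refine Finset.sum_congr rfl fun b _ => ?_
          rw [Finset.sum_eq_single (-(b * y))]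
          · rw [if_pos (by ring)]
          · intro a _ ha
            rw [if_neg (fun h => ha (by linear_combination h)), mul_zero]
          · intro h
            exact absurd (Finset.mem_univ _) h
      _ = (p : ℂ) * ∑ x : ZMod p, ((nuF p μ x : ℝ) : ℂ) * ((nuF p μ (y * x) : ℝ) : ℂ) := by
          rw [Finset.mul_sum]
          refine Finset.sum_congr rfl fun b _ => ?_
          rw [show nuF p μ (-(b * y)) = nuF p μ (y * b) by rw [nuF_even, mul_comm]]
          ring
  have := main
  push_cast at this
  exact_mod_cast Complex.ofReal_inj.mp (by push_cast; exact this)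

lemma ft_zero : ft p μ 0 = ((∑ x : ZMod p, μ x : ℝ) : ℂ) := by
  rw [ft]
  push_cast
  refine Finset.sum_congr rfl fun x _ => ?_
  rw [mul_zero, ePsi_zero, mul_one]

end Key

set_option maxHeartbeats 1000000 in
theorem stmt6 (p : ℕ) [Fact p.Prime] (μ : ZMod p → ℝ)
    (hpos : ∀ x, 0 ≤ μ x) (hsum : ∑ x : ZMod p, μ x = 1)
    (Δ : ℝ) (hΔ0 : 0 < Δ) (hΔ1 : Δ ≤ 1 / 2)
    (h25 : ∑ ξ : ZMod p, ∑ y : ZMod p,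
        ‖ft p μ ξ‖ ^ 2 * ‖ft p μ (y * ξ)‖ ^ 2 * μ y
      > Δ * ∑ ξ : ZMod p, ‖ft p μ ξ‖ ^ 2)
    (h26a : μ 0 < Δ / 4) (h26b : ∑ x : ZMod p, (μ x) ^ 2 < Δ / 4)
    (S1 S2 T : Finset (ZMod p))
    (hS1 : S1 = Finset.univ.filter (fun x => Δ / 8 * phiF p μ 0 < phiF p μ x))
    (hS2 : S2 = S1.erase 0)
    (hT : T = Finset.univ.filter (fun y : ZMod p => y ≠ 0 ∧
        Δ * p / (8 * phiF p μ 0) < ((S2.filter (fun x => y * x ∈ S2)).card : ℝ))) :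
    (T.card : ℝ) ≥ Δ ^ 5 / 2 ^ 15 * (S1.card : ℝ) := by
  classical
  have hp : (0:ℝ) < p := by exact_mod_cast (Fact.out : p.Prime).pos
  have hPne : ((p:ℝ)) ≠ 0 := ne_of_gt hp
  set ν : ZMod p → ℝ := nuF p μ with hνdef
  set φ : ZMod p → ℝ := phiF p μ with hφdef
  have hφ : ∀ x, φ x = (p:ℝ) * ν x := fun x => rfl
  have hν0 : ν 0 = ∑ x : ZMod p, μ x ^ 2 := nuF_zero_eq p μ
  have hνnn : ∀ x, 0 ≤ ν x := nuF_nonneg p μ hpos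
  have hνle : ∀ x, ν x ≤ ν 0 := nuF_le_zero p μ hpos
  have hνsum : ∑ x : ZMod p, ν x = 1 := nuF_sum p μ hsum
  have hν0pos : 0 < ν 0 := by
    obtain ⟨x, hx⟩ := Finset.exists_ne_zero_of_sum_ne_zero
      (show (∑ x : ZMod p, μ x) ≠ 0 by rw [hsum]; norm_num)
    rw [hν0]
    exact Finset.sum_pos' (fun i _ => sq_nonneg _) ⟨x, Finset.mem_univ x, lt_of_le_of_ne (sq_nonneg _) (Ne.symm (pow_ne_zero 2 hx.2))⟩
  have hφnn : ∀ x, 0 ≤ φ x := fun x => by rw [hφ]; exact mul_nonneg hp.le (hνnn x)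
  have hφle : ∀ x, φ x ≤ φ 0 := fun x => by
    rw [hφ, hφ]; exact mul_le_mul_of_nonneg_left (hνle x) hp.le
  have hφ0pos : 0 < φ 0 := by rw [hφ]; exact mul_pos hp hν0pos
  have hφne : φ 0 ≠ 0 := ne_of_gt hφ0pos
  have hφsum : ∑ x : ZMod p, φ x = (p:ℝ) := by
    have : ∑ x : ZMod p, φ x = (p:ℝ) * ∑ x : ZMod p, ν x := by
      rw [Finset.mul_sum]; exact Finset.sum_congr rfl fun x _ => hφ x
    rw [this, hνsum, mul_one]
  have hφ0lt : φ 0 < (p:ℝ) * (Δ/4) := by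
    rw [hφ, hν0]
    exact mul_lt_mul_of_pos_left h26b hp
  have hν0' : ν 0 = φ 0 / (p:ℝ) := by rw [hφ]; field_simp
  -- key identity in terms of φ
  have key : ∀ y : ZMod p,
      (p:ℝ) * ∑ ξ : ZMod p, ‖ft p μ ξ‖^2 * ‖ft p μ (y*ξ)‖^2
        = ∑ x : ZMod p, φ x * φ (y*x) := by
    intro y
    rw [key_nu p μ y]
    have : ∑ x : ZMod p, φ x * φ (y*x) = (p:ℝ) * ((p:ℝ) * ∑ x : ZMod p, ν x * ν (y*x)) := by
      rw [Finset.mul_sum, Finset.mul_sum]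
      exact Finset.sum_congr rfl fun x _ => by rw [hφ x, hφ (y*x)]; ring
    rw [this]
  have hft0 : ‖ft p μ 0‖ = 1 := by
    rw [ft_zero, hsum]
    norm_num
  have parseval : ∑ ξ : ZMod p, ‖ft p μ ξ‖^2 = φ 0 := by
    have h0 := key 0
    simp only [zero_mul] at h0
    rw [hft0] at h0
    simp only [one_pow, mul_one] at h0
    have h1 : ∑ x : ZMod p, φ x * φ 0 = (p:ℝ) * φ 0 := by rw [← Finset.sum_mul, hφsum]
    rw [h1] at h0
    exact mul_left_cancel₀ hPne h0
  set F : ZMod p → ℝ := fun y => ∑ x : ZMod p, φ x * φ (y*x) with hF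
  set N : ZMod p → ℝ := fun y => ((S2.filter (fun x => y * x ∈ S2)).card : ℝ) with hN
  have hNnn : ∀ y, 0 ≤ N y := fun y => by simp only [hN]; exact Nat.cast_nonneg _
  -- Step A
  have stepA : Δ * ((p:ℝ) * φ 0) < ∑ y : ZMod p, μ y * F y := by
    have hswap : ∑ ξ : ZMod p, ∑ y : ZMod p,
        ‖ft p μ ξ‖^2 * ‖ft p μ (y*ξ)‖^2 * μ y
        = ∑ y : ZMod p, μ y * ∑ ξ : ZMod p,
            ‖ft p μ ξ‖^2 * ‖ft p μ (y*ξ)‖^2 := by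
      rw [Finset.sum_comm]
      exact Finset.sum_congr rfl fun y _ => by
        rw [Finset.mul_sum]; exact Finset.sum_congr rfl fun ξ _ => by ring
    rw [hswap, parseval] at h25
    have h2 := mul_lt_mul_of_pos_left h25 hp
    calc Δ * ((p:ℝ) * φ 0) = (p:ℝ) * (Δ * φ 0) := by ring
      _ < (p:ℝ) * ∑ y : ZMod p, μ y * ∑ ξ : ZMod p,
            ‖ft p μ ξ‖^2 * ‖ft p μ (y*ξ)‖^2 := h2
      _ = ∑ y : ZMod p, μ y * F y := by
          rw [Finset.mul_sum]
          exact Finset.sum_congr rfl fun y _ => by simp only [hF]; rw [← key y]; ring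
  -- Step B
  have hF0 : F 0 = (p:ℝ) * φ 0 := by
    have : F 0 = ∑ x : ZMod p, φ x * φ 0 := by
      simp only [hF, zero_mul]
    rw [this, ← Finset.sum_mul, hφsum]
  have stepB : 3*Δ/4 * ((p:ℝ) * φ 0) < ∑ y ∈ Finset.univ.erase (0:ZMod p), μ y * F y := by
    have hsplit : ∑ y : ZMod p, μ y * F y
        = μ 0 * F 0 + ∑ y ∈ Finset.univ.erase (0:ZMod p), μ y * F y :=
      (Finset.add_sum_erase _ _ (Finset.mem_univ 0)).symm
    have hb : μ 0 * F 0 ≤ Δ/4 * ((p:ℝ)*φ 0) := by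
      rw [hF0]
      exact mul_le_mul_of_nonneg_right h26a.le (by positivity)
    linarith [stepA]
  -- membership facts
  have hnotS1 : ∀ x : ZMod p, x ∉ S1 → φ x ≤ Δ/8 * φ 0 := by
    intro x hx
    rw [hS1, Finset.mem_filter] at hx
    push_neg at hx
    exact hx (Finset.mem_univ x)
  have hS2mem : ∀ x : ZMod p, x ∈ S2 ↔ (x ≠ 0 ∧ x ∈ S1) := by
    intro x; rw [hS2, Finset.mem_erase]
  have hsum_shift : ∀ y : ZMod p, y ≠ 0 → ∑ x : ZMod p, φ (y*x) = (p:ℝ) := by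
    intro y hy
    rw [Fintype.sum_equiv (Equiv.mulLeft₀ y hy) (fun x => φ (y*x)) φ (fun x => rfl)]
    exact hφsum
  -- Step C
  have stepC : ∀ y : ZMod p, y ≠ 0 → F y ≤ φ 0^2 * N y + Δ/2 * ((p:ℝ) * φ 0) := by
    intro y hy
    set A : Finset (ZMod p) := S2.filter (fun x => y * x ∈ S2) with hA
    have h1 : ∑ x ∈ A, φ x * φ (y*x) ≤ φ 0^2 * N y := by
      calc ∑ x ∈ A, φ x * φ (y*x) ≤ ∑ _x ∈ A, φ 0 * φ 0 :=
            Finset.sum_le_sum fun x _ => mul_le_mul (hφle x) (hφle _) (hφnn _) (hφnn 0)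
        _ = φ 0^2 * N y := by
            rw [Finset.sum_const, nsmul_eq_mul, hN, hA]
            ring
    set g : ZMod p → ℝ := fun x => if x = 0 then φ 0 * φ 0 else Δ/8 * φ 0 * (φ x + φ (y*x))
      with hg
    have hgnn : ∀ x, 0 ≤ g x := by
      intro x
      simp only [hg]
      split_ifs
      · positivity
      · have := hφnn x; have := hφnn (y*x); positivity
    have h2 : ∀ x ∈ Finset.univ \ A, φ x * φ (y*x) ≤ g x := by
      intro x hx
      rw [Finset.mem_sdiff, hA, Finset.mem_filter] at hx
      by_cases hx0 : x = 0
      · subst hx0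
        simp only [hg, if_pos rfl, mul_zero]
        exact mul_le_mul (hφle 0) (hφle 0) (hφnn 0) (hφnn 0)
      · simp only [hg, if_neg hx0]
        by_cases hxS : x ∈ S2
        · have hyx : y*x ∉ S2 := fun h => hx.2 ⟨hxS, h⟩
          have hyx0 : y*x ≠ 0 := mul_ne_zero hy hx0
          have hyxS1 : y*x ∉ S1 := fun h => hyx ((hS2mem (y*x)).2 ⟨hyx0, h⟩)
          have hb := hnotS1 _ hyxS1
          nlinarith [hφnn x, hφnn (y*x), mul_le_mul_of_nonneg_left hb (hφnn x)]
        · have hxS1 : x ∉ S1 := fun h => hxS ((hS2mem x).2 ⟨hx0, h⟩)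
          have hb := hnotS1 _ hxS1
          nlinarith [hφnn x, hφnn (y*x), mul_le_mul_of_nonneg_right hb (hφnn (y*x))]
    have h3 : ∑ x ∈ Finset.univ \ A, φ x * φ (y*x) ≤ ∑ x ∈ Finset.univ \ A, g x :=
      Finset.sum_le_sum h2
    have h4 : ∑ x ∈ Finset.univ \ A, g x ≤ ∑ x : ZMod p, g x :=
      Finset.sum_le_sum_of_subset_of_nonneg (Finset.subset_univ _) fun i _ _ => hgnn i
    have h5 : ∑ x : ZMod p, g x = g 0 + ∑ x ∈ Finset.univ.erase (0:ZMod p), g x :=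
      (Finset.add_sum_erase _ _ (Finset.mem_univ 0)).symm
    have h6 : ∑ x ∈ Finset.univ.erase (0:ZMod p), g x
        = ∑ x ∈ Finset.univ.erase (0:ZMod p), Δ/8 * φ 0 * (φ x + φ (y*x)) :=
      Finset.sum_congr rfl fun x hx => by
        simp only [hg]; exact if_neg (Finset.ne_of_mem_erase hx)
    have h7 : ∑ x ∈ Finset.univ.erase (0:ZMod p), Δ/8 * φ 0 * (φ x + φ (y*x))
        ≤ ∑ x : ZMod p, Δ/8 * φ 0 * (φ x + φ (y*x)) :=
      Finset.sum_le_sum_of_subset_of_nonneg (Finset.subset_univ _) fun i _ _ => by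
        have := hφnn i; have := hφnn (y*i); positivity
    have h8 : ∑ x : ZMod p, Δ/8 * φ 0 * (φ x + φ (y*x)) = Δ/8 * φ 0 * ((p:ℝ) + (p:ℝ)) := by
      rw [← Finset.mul_sum, Finset.sum_add_distrib, hφsum, hsum_shift y hy]
    have h9 : g 0 = φ 0 * φ 0 := by simp only [hg, if_pos rfl]
    have h10 : φ 0 * φ 0 ≤ (p:ℝ)*(Δ/4) * φ 0 := mul_le_mul_of_nonneg_right hφ0lt.le (hφnn 0)
    have hsplit : F y = ∑ x ∈ A, φ x * φ (y*x) + ∑ x ∈ Finset.univ \ A, φ x * φ (y*x) := by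
      simp only [hF]
      rw [← Finset.sum_sdiff (Finset.subset_univ A)]
      ring
    rw [hsplit]
    linarith
  -- Step D
  have hsumμ_le : ∀ s : Finset (ZMod p), ∑ y ∈ s, μ y ≤ 1 := fun s => by
    rw [← hsum]
    exact Finset.sum_le_sum_of_subset_of_nonneg (Finset.subset_univ s) fun i _ _ => hpos i
  have stepD : Δ/4 * ((p:ℝ) * φ 0) < (∑ y ∈ Finset.univ.erase (0:ZMod p), μ y * N y) * φ 0^2 := by
    have hb : ∑ y ∈ Finset.univ.erase (0:ZMod p), μ y * F y
        ≤ ∑ y ∈ Finset.univ.erase (0:ZMod p),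
            (μ y * N y * φ 0^2 + μ y * (Δ/2 * ((p:ℝ)*φ 0))) := by
      refine Finset.sum_le_sum fun y hy => ?_
      have hC := stepC y (Finset.ne_of_mem_erase hy)
      nlinarith [hpos y, mul_le_mul_of_nonneg_left hC (hpos y)]
    rw [Finset.sum_add_distrib] at hb
    have h2 : ∑ y ∈ Finset.univ.erase (0:ZMod p), μ y * (Δ/2*((p:ℝ)*φ 0))
        ≤ Δ/2*((p:ℝ)*φ 0) := by
      rw [← Finset.sum_mul]
      calc (∑ y ∈ Finset.univ.erase (0:ZMod p), μ y) * (Δ/2*((p:ℝ)*φ 0))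
          ≤ 1 * (Δ/2*((p:ℝ)*φ 0)) :=
            mul_le_mul_of_nonneg_right (hsumμ_le _) (by positivity)
        _ = Δ/2*((p:ℝ)*φ 0) := one_mul _
    have h3 : ∑ y ∈ Finset.univ.erase (0:ZMod p), μ y * N y * φ 0^2
        = (∑ y ∈ Finset.univ.erase (0:ZMod p), μ y * N y) * φ 0^2 := by
      rw [Finset.sum_mul]
    linarith [stepB]
  -- Step E
  set c : ℝ := Δ * (p:ℝ) / (8 * φ 0) with hc
  have hcpos : 0 < c := by rw [hc]; positivity
  have hTmem : ∀ y : ZMod p, y ∈ T ↔ (y ≠ 0 ∧ c < N y) := by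
    intro y
    rw [hT, Finset.mem_filter]
    constructor
    · rintro ⟨-, h1, h2⟩; exact ⟨h1, h2⟩
    · rintro ⟨h1, h2⟩; exact ⟨Finset.mem_univ y, h1, h2⟩
  have hTsubset : T ⊆ Finset.univ.erase (0:ZMod p) := fun y hy =>
    Finset.mem_erase.2 ⟨((hTmem y).1 hy).1, Finset.mem_univ y⟩
  have h2c : 2 * c < ∑ y ∈ Finset.univ.erase (0:ZMod p), μ y * N y := by
    have hid : 2 * c * φ 0^2 = Δ/4 * ((p:ℝ) * φ 0) := by
      rw [hc]; field_simp; ring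
    have hD := stepD
    rw [← hid] at hD
    exact lt_of_mul_lt_mul_right hD (by positivity)
  have stepE : c < ∑ y ∈ T, μ y * N y := by
    have hsplit : ∑ y ∈ Finset.univ.erase (0:ZMod p), μ y * N y
        = ∑ y ∈ T, μ y * N y
          + ∑ y ∈ (Finset.univ.erase (0:ZMod p)) \ T, μ y * N y := by
      rw [← Finset.sum_sdiff hTsubset]
      ring
    have h2 : ∑ y ∈ (Finset.univ.erase (0:ZMod p)) \ T, μ y * N y ≤ c := by
      have hb : ∀ y ∈ (Finset.univ.erase (0:ZMod p)) \ T, μ y * N y ≤ μ y * c := by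
        intro y hy
        rw [Finset.mem_sdiff] at hy
        have hy0 : y ≠ 0 := Finset.ne_of_mem_erase hy.1
        have hNy : N y ≤ c := by
          by_contra hlt
          push_neg at hlt
          exact hy.2 ((hTmem y).2 ⟨hy0, hlt⟩)
        exact mul_le_mul_of_nonneg_left hNy (hpos y)
      calc ∑ y ∈ (Finset.univ.erase (0:ZMod p)) \ T, μ y * N y
          ≤ ∑ y ∈ (Finset.univ.erase (0:ZMod p)) \ T, μ y * c := Finset.sum_le_sum hb
        _ = (∑ y ∈ (Finset.univ.erase (0:ZMod p)) \ T, μ y) * c := by rw [Finset.sum_mul]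
        _ ≤ 1 * c := mul_le_mul_of_nonneg_right (hsumμ_le _) hcpos.le
        _ = c := one_mul c
    linarith
  -- Cauchy–Schwarz
  set s2 : ℝ := (S2.card : ℝ) with hs2
  set s1 : ℝ := (S1.card : ℝ) with hs1
  set t : ℝ := (T.card : ℝ) with htt
  have ht0 : 0 ≤ t := by rw [htt]; exact Nat.cast_nonneg _
  have hs10 : 0 ≤ s1 := by rw [hs1]; exact Nat.cast_nonneg _
  have hs20 : 0 ≤ s2 := by rw [hs2]; exact Nat.cast_nonneg _
  have hNle : ∀ y, N y ≤ s2 := fun y => by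
    simp only [hN, hs2]
    exact_mod_cast Finset.card_filter_le S2 _
  have CS := Finset.sum_mul_sq_le_sq_mul_sq T (fun y => μ y) (fun y => N y)
  have hμsq : ∑ y ∈ T, μ y^2 ≤ ν 0 := by
    rw [hν0]
    exact Finset.sum_le_sum_of_subset_of_nonneg (Finset.subset_univ T)
      fun i _ _ => sq_nonneg _
  have hNsq : ∑ y ∈ T, N y^2 ≤ t * s2^2 := by
    calc ∑ y ∈ T, N y^2 ≤ ∑ _y ∈ T, s2^2 :=
          Finset.sum_le_sum fun y _ => pow_le_pow_left₀ (hNnn y) (hNle y) 2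
      _ = t * s2^2 := by rw [Finset.sum_const, nsmul_eq_mul, htt]
  have stepF : c^2 < ν 0 * (t * s2^2) := by
    have h1 : c^2 < (∑ y ∈ T, μ y * N y)^2 := by nlinarith [stepE, hcpos]
    have h0N : (0:ℝ) ≤ ∑ y ∈ T, N y^2 := Finset.sum_nonneg fun y _ => sq_nonneg _
    have h2 : (∑ y ∈ T, μ y * N y)^2 ≤ ν 0 * (t * s2^2) :=
      le_trans CS (mul_le_mul hμsq hNsq h0N hν0pos.le)
    linarith
  -- Step G
  have stepG : s1 * (Δ/8 * φ 0) ≤ (p:ℝ) := by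
    have h1 : ∀ x ∈ S1, Δ/8 * φ 0 ≤ φ x := fun x hx => by
      rw [hS1, Finset.mem_filter] at hx
      exact hx.2.le
    calc s1 * (Δ/8*φ 0) = ∑ _x ∈ S1, Δ/8*φ 0 := by
          rw [Finset.sum_const, nsmul_eq_mul, hs1]
      _ ≤ ∑ x ∈ S1, φ x := Finset.sum_le_sum h1
      _ ≤ ∑ x : ZMod p, φ x :=
          Finset.sum_le_sum_of_subset_of_nonneg (Finset.subset_univ _) fun i _ _ => hφnn i
      _ = (p:ℝ) := hφsum
  have hs2le : s2 ≤ s1 := by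
    rw [hs2, hs1, hS2]
    exact_mod_cast Finset.card_le_card (Finset.erase_subset _ _)
  -- Final algebra
  have e1 : Δ^2 * (p:ℝ)^3 < 64 * (φ 0^3 * (t * s2^2)) := by
    have h := stepF
    rw [hν0', hc] at h
    have h2 := mul_lt_mul_of_pos_left h (show (0:ℝ) < 64 * φ 0^2 * (p:ℝ) by positivity)
    calc Δ^2*(p:ℝ)^3 = 64*φ 0^2*(p:ℝ) * (Δ*(p:ℝ)/(8*φ 0))^2 := by
          field_simp
          ring
      _ < 64*φ 0^2*(p:ℝ) * (φ 0/(p:ℝ) * (t*s2^2)) := h2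
      _ = 64*(φ 0^3*(t*s2^2)) := by
          field_simp
  by_cases hs1z : s1 = 0
  · rw [ge_iff_le, hs1z, mul_zero]
    exact ht0
  · have hs1pos : 0 < s1 := lt_of_le_of_ne hs10 (Ne.symm hs1z)
    have e2 : (Δ*φ 0*s1)^3 ≤ (8*(p:ℝ))^3 :=
      pow_le_pow_left₀ (mul_nonneg (mul_nonneg hΔ0.le (hφnn 0)) hs10) (by nlinarith [stepG]) 3
    have e3 : s2^2 ≤ s1^2 := pow_le_pow_left₀ hs20 hs2le 2
    have e4 : Δ^2*(p:ℝ)^3 < 64*(φ 0^3*(t*s1^2)) := by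
      have h : 64*(φ 0^3*(t*s2^2)) ≤ 64*(φ 0^3*(t*s1^2)) := by
        have hh := mul_le_mul_of_nonneg_left e3 (show (0:ℝ) ≤ 64*(φ 0^3*t) from mul_nonneg (by norm_num) (mul_nonneg (pow_nonneg (hφnn 0) 3) ht0))
        calc 64*(φ 0^3*(t*s2^2)) = 64*(φ 0^3*t)*s2^2 := by ring
          _ ≤ 64*(φ 0^3*t)*s1^2 := hh
          _ = 64*(φ 0^3*(t*s1^2)) := by ring
      exact lt_of_lt_of_le e1 h
    have e5 : Δ^5*s1^3*(p:ℝ)^3 < 64*(φ 0^3*(t*s1^2)) * (Δ^3*s1^3) := by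
      have h := mul_lt_mul_of_pos_right e4 (show (0:ℝ) < Δ^3*s1^3 from mul_pos (pow_pos hΔ0 3) (pow_pos hs1pos 3))
      calc Δ^5*s1^3*(p:ℝ)^3 = Δ^2*(p:ℝ)^3 * (Δ^3*s1^3) := by ring
        _ < 64*(φ 0^3*(t*s1^2)) * (Δ^3*s1^3) := h
    have e7 : 64*(Δ*φ 0*s1)^3*(t*s1^2) ≤ 64*(8*(p:ℝ))^3*(t*s1^2) := by
      have h0 : (0:ℝ) ≤ t*s1^2 := mul_nonneg ht0 (sq_nonneg _)
      linarith [mul_le_mul_of_nonneg_right e2 h0]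
    have e8 : Δ^5*s1^3*(p:ℝ)^3 < 2^15*(p:ℝ)^3*(t*s1^2) := by
      have hmid : 64*(φ 0^3*(t*s1^2))*(Δ^3*s1^3) = 64*(Δ*φ 0*s1)^3*(t*s1^2) := by ring
      have : 64*(8*(p:ℝ))^3*(t*s1^2) = 2^15*(p:ℝ)^3*(t*s1^2) := by ring
      linarith [e5, e7]
    have e9 : Δ^5*s1 < 2^15*t := by
      have hpos9 : (0:ℝ) < (p:ℝ)^3*s1^2 := mul_pos (pow_pos hp 3) (pow_pos hs1pos 2)
      have h := lt_of_mul_lt_mul_right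
        (show (Δ^5*s1)*((p:ℝ)^3*s1^2) < (2^15*t)*((p:ℝ)^3*s1^2) by linarith [e8]) hpos9.le
      exact h
    rw [ge_iff_le]
    linarith
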